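/- Let a ≥ b > 0 and c > 0 be real numbers, and define h_n = (ψ(c+n) − ψ(c)) · (a)_n / (b)_n for integers n ≥ 0, where ψ(z) = Γ'(z)/Γ(z) is the digamma function (the derivative of log Γ). Then the sequence {h_n}_{n≥0} is strictly log-concave: h_n^2 > h_{n−1} h_{n+1} for every n ≥ 1. -/

import Mathlib

/-- The rising factorial (Pochhammer symbol) `(μ)_n = μ(μ+1)⋯(μ+n−1)`. -/
noncomputable def risingFactorial (μ : ℝ) : ℕ → ℝ
  | 0 => 1
  | n + 1 => risingFactorial μ n * (μ + n)

/-- The digamma function `ψ = (log Γ)'`. -/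
noncomputable def digamma (z : ℝ) : ℝ :=
  deriv (fun x : ℝ => Real.log (Real.Gamma x)) z

lemma rf_pos {μ : ℝ} (hμ : 0 < μ) : ∀ n : ℕ, 0 < risingFactorial μ n
  | 0 => one_pos
  | n + 1 => by
      have h1 := rf_pos hμ n
      have h2 : (0:ℝ) < μ + n := by positivity
      simpa [risingFactorial] using mul_pos h1 h2

lemma hasDerivAt_logGamma {x : ℝ} (hx : 0 < x) :
    HasDerivAt (fun y : ℝ => Real.log (Real.Gamma y)) (digamma x) x := by
  have hΓ : DifferentiableAt ℝ Real.Gamma x := by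
    refine Real.differentiableAt_Gamma fun m => ?_
    have : (0:ℝ) ≤ m := Nat.cast_nonneg m
    intro hxm; rw [hxm] at hx; linarith
  have hd : DifferentiableAt ℝ (fun y : ℝ => Real.log (Real.Gamma y)) x :=
    hΓ.log (Real.Gamma_pos_of_pos hx).ne'
  simpa [digamma] using hd.hasDerivAt

lemma digamma_add_one {x : ℝ} (hx : 0 < x) : digamma (x + 1) = digamma x + 1 / x := by
  have h1 : HasDerivAt (fun y : ℝ => Real.log (Real.Gamma (y + 1))) (digamma (x + 1)) x := by
    have := (hasDerivAt_logGamma (by linarith : (0:ℝ) < x + 1)).comp x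
      ((hasDerivAt_id x).add_const 1)
    simpa [Function.comp_def] using this
  have h2 : HasDerivAt (fun y : ℝ => Real.log y + Real.log (Real.Gamma y))
      (1 / x + digamma x) x := by
    have := (Real.hasDerivAt_log hx.ne').add (hasDerivAt_logGamma hx)
    simpa [one_div, Pi.add_def] using this
  have heq : (fun y : ℝ => Real.log y + Real.log (Real.Gamma y))
      =ᶠ[nhds x] (fun y : ℝ => Real.log (Real.Gamma (y + 1))) := by
    filter_upwards [eventually_gt_nhds hx] with y hy
    rw [Real.Gamma_add_one hy.ne', Real.log_mul hy.ne' (Real.Gamma_pos_of_pos hy).ne']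
  have h2' : HasDerivAt (fun y : ℝ => Real.log (Real.Gamma (y + 1)))
      (1 / x + digamma x) x := h2.congr_of_eventuallyEq heq.symm
  have := h1.unique h2'
  linarith

theorem stmt_18 (a b c : ℝ) (hb : 0 < b) (hab : b ≤ a) (hc : 0 < c) (h : ℕ → ℝ)
    (hdef : ∀ n : ℕ, h n = (digamma (c + n) - digamma c) * risingFactorial a n / risingFactorial b n) :
    ∀ n : ℕ, h n * h (n + 2) < (h (n + 1)) ^ 2 := by
  have ha : 0 < a := lt_of_lt_of_le hb hab
  set D : ℕ → ℝ := fun k => digamma (c + k) - digamma c with hD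
  set R : ℕ → ℝ := fun k => risingFactorial a k / risingFactorial b k with hR
  have hh : ∀ k, h k = D k * R k := by
    intro k; rw [hdef k, mul_div_assoc]
  have hRpos : ∀ k, 0 < R k := fun k => div_pos (rf_pos ha k) (rf_pos hb k)
  have hDstep : ∀ k : ℕ, D (k + 1) = D k + 1 / (c + k) := by
    intro k
    have hck : 0 < c + (k : ℝ) := by positivity
    have hrec := digamma_add_one hck
    simp only [hD]
    push_cast
    rw [show c + ((k : ℝ) + 1) = (c + k) + 1 by ring, hrec]
    ring
  have hDnonneg : ∀ k, 0 ≤ D k := by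
    intro k; induction k with
    | zero => simp [hD]
    | succ k ih =>
        have hck : (0:ℝ) < 1 / (c + k) := by positivity
        rw [hDstep]; exact add_nonneg ih hck.le
  have hRstep : ∀ k : ℕ, R (k + 1) = R k * ((a + k) / (b + k)) := by
    intro k
    have hbk : (0:ℝ) < b + k := by positivity
    simp only [hR, risingFactorial, div_mul_div_comm]
  intro n
  -- D part: strict log-concavity
  have hu : (0:ℝ) < 1 / (c + n) := by positivity
  have hv : (0:ℝ) < 1 / (c + (n + 1 : ℕ)) := by positivity
  have huv : 1 / (c + ((n + 1 : ℕ) : ℝ)) ≤ 1 / (c + n) := by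
    apply one_div_le_one_div_of_le (by positivity)
    push_cast; linarith
  have hDpart : D n * D (n + 2) < D (n + 1) ^ 2 := by
    have e1 := hDstep n
    have e2 : D (n + 2) = D (n + 1) + 1 / (c + ((n + 1 : ℕ) : ℝ)) := hDstep (n + 1)
    have hd0 := hDnonneg n
    rw [e2, e1]
    nlinarith [mul_nonneg hd0 (sub_nonneg.mpr huv), mul_pos hu hu]
  -- R part: log-concavity
  have hRpart : R n * R (n + 2) ≤ R (n + 1) ^ 2 := by
    have e1 := hRstep n
    have e2 := hRstep (n + 1)
    have hq : (a + ((n + 1 : ℕ) : ℝ)) / (b + ((n + 1 : ℕ) : ℝ)) ≤ (a + n) / (b + n) := by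
      rw [div_le_div_iff₀ (by positivity) (by positivity)]
      push_cast; nlinarith
    have hrn := (hRpos n).le
    have hrn1 := (hRpos (n + 1)).le
    calc R n * R (n + 2) = R n * R (n + 1) * ((a + ((n+1:ℕ):ℝ)) / (b + ((n+1:ℕ):ℝ))) := by
          rw [e2]; ring
      _ ≤ R n * R (n + 1) * ((a + n) / (b + n)) := by
          apply mul_le_mul_of_nonneg_left hq (by positivity)
      _ = R (n + 1) ^ 2 := by rw [e1]; ring
  -- combine
  rw [hh n, hh (n + 1), hh (n + 2)]
  have hA : 0 ≤ D n * D (n + 2) := by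
    have := hDnonneg (n + 2)
    exact mul_nonneg (hDnonneg n) this
  have hB : 0 < R n * R (n + 2) := mul_pos (hRpos n) (hRpos (n + 2))
  have hA' : 0 ≤ D (n + 1) ^ 2 := sq_nonneg _
  calc D n * R n * (D (n + 2) * R (n + 2))
      = (D n * D (n + 2)) * (R n * R (n + 2)) := by ring
    _ < D (n + 1) ^ 2 * (R n * R (n + 2)) := by
        exact mul_lt_mul_of_pos_right hDpart hB
    _ ≤ D (n + 1) ^ 2 * R (n + 1) ^ 2 := mul_le_mul_of_nonneg_left hRpart hA'
    _ = (D (n + 1) * R (n + 1)) ^ 2 := by ring
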